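/- arXiv:2107.00089 — 3 statements merged into one kernel-verified Lean document; each statement's English description precedes it below -/
import Mathlib

section
/- For every ε > 0 and every continuously differentiable function φ : ℝ^d → ℝ such that φ and the pointwise norm of its gradient |∇φ| both belong to L²(ℝ^d), one has ‖S^ε φ − φ‖_{L²} ≤ (√d / 2) · ε · ‖∇φ‖_{L²}. -/
open MeasureTheory
open scoped ENNReal NNReal

noncomputable section

/-- The unit cube `Y = [-1/2, 1/2)^d`. -/
def cube (d : ℕ) : Set (Fin d → ℝ) := Set.univ.pi fun _ => Set.Ico (-(1:ℝ)/2) (1/2)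

/-- Steklov's smoothing operator: `(S^ε φ)(x) = ∫_Y φ(x - εω) dω`. -/
def steklov (d : ℕ) (ε : ℝ) (φ : (Fin d → ℝ) → ℝ) (x : Fin d → ℝ) : ℝ :=
  ∫ ω in cube d, φ (x - ε • ω)

/-- Partial derivative in the `i`-th coordinate direction. -/
def pd (d : ℕ) (i : Fin d) (f : (Fin d → ℝ) → ℝ) (x : Fin d → ℝ) : ℝ :=
  fderiv ℝ f x (Pi.single i 1)

/-- Pointwise Euclidean norm of the gradient: `|∇φ(x)|`. -/
def gradNorm (d : ℕ) (φ : (Fin d → ℝ) → ℝ) (x : Fin d → ℝ) : ℝ :=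
  Real.sqrt (∑ i, (pd d i φ x) ^ 2)

namespace SteklovAux

lemma cube_meas (d : ℕ) : MeasurableSet (cube d) :=
  MeasurableSet.univ_pi fun _ => measurableSet_Ico

lemma cube_volume (d : ℕ) : volume (cube d) = 1 := by
  rw [cube, volume_pi_pi]
  norm_num [Real.volume_Ico]

lemma cube_subset (d : ℕ) :
    cube d ⊆ Set.Icc (fun _ => -(1:ℝ)/2) (fun _ => 1/2) := by
  rw [← Set.pi_univ_Icc]
  exact Set.pi_mono fun i _ => Set.Ico_subset_Icc_self

variable {d : ℕ} {φ : (Fin d → ℝ) → ℝ} {ε : ℝ}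

lemma continuous_pd (hφ : ContDiff ℝ 1 φ) (i : Fin d) : Continuous (pd d i φ) := by
  have h := hφ.continuous_fderiv one_ne_zero
  unfold pd
  fun_prop

lemma continuous_gradNorm (hφ : ContDiff ℝ 1 φ) : Continuous (gradNorm d φ) := by
  unfold gradNorm
  exact (continuous_finset_sum _ fun i _ => ((continuous_pd hφ i).pow 2)).sqrt

lemma gradNorm_nonneg (x : Fin d → ℝ) : 0 ≤ gradNorm d φ x := Real.sqrt_nonneg _

lemma fderiv_apply_eq (y v : Fin d → ℝ) :
    fderiv ℝ φ y v = ∑ i, v i * pd d i φ y := by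
  have hv : v = ∑ i, v i • (Pi.single i 1 : Fin d → ℝ) := by
    funext j
    simp [Finset.sum_apply, Pi.single_apply]
  conv_lhs => rw [hv]
  rw [map_sum]
  simp [pd, smul_eq_mul]

lemma cauchy (y v : Fin d → ℝ) :
    |fderiv ℝ φ y v| ≤ Real.sqrt (∑ i, v i ^ 2) * gradNorm d φ y := by
  rw [fderiv_apply_eq, gradNorm, ← Real.sqrt_mul (by positivity)]
  rw [← Real.sqrt_sq_eq_abs]
  exact Real.sqrt_le_sqrt (Finset.sum_mul_sq_le_sq_mul_sq _ _ _)

lemma ftc (hφ : ContDiff ℝ 1 φ) (x v : Fin d → ℝ) :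
    φ (x - v) - φ x = ∫ t in (0:ℝ)..1, fderiv ℝ φ (x - t • v) (-v) := by
  have hpath : ∀ t : ℝ, HasDerivAt (fun t : ℝ => x - t • v) (-v) t := fun t => by
    simpa using ((hasDerivAt_id t).smul_const v).const_sub x
  have hF : ∀ t : ℝ, HasDerivAt (fun t : ℝ => φ (x - t • v))
      (fderiv ℝ φ (x - t • v) (-v)) t := fun t =>
    ((hφ.differentiable one_ne_zero).differentiableAt.hasFDerivAt).comp_hasDerivAt t (hpath t)
  have hcont : Continuous fun t : ℝ => fderiv ℝ φ (x - t • v) (-v) := by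
    have h := hφ.continuous_fderiv one_ne_zero
    fun_prop
  rw [intervalIntegral.integral_eq_sub_of_hasDerivAt (fun t _ => hF t)
    (hcont.intervalIntegrable 0 1)]
  simp

lemma vec_bound (hε : 0 < ε) {ω : Fin d → ℝ} (hω : ω ∈ cube d) :
    Real.sqrt (∑ i, ((-(ε • ω)) i) ^ 2) ≤ Real.sqrt d / 2 * ε := by
  have h1 : ∀ i ∈ Finset.univ, ((-(ε • ω)) i) ^ 2 ≤ ε ^ 2 * (1/4) := by
    intro i _
    have hi := hω i (Set.mem_univ i)
    have habs : |ω i| ≤ 1/2 := abs_le.2 ⟨by linarith [hi.1], le_of_lt hi.2⟩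
    have h2 : (ω i) ^ 2 ≤ (1/2) ^ 2 := by
      rw [← sq_abs]; exact pow_le_pow_left₀ (abs_nonneg _) habs 2
    have : ((-(ε • ω)) i) ^ 2 = ε ^ 2 * (ω i) ^ 2 := by
      simp [Pi.smul_apply, mul_pow]
    rw [this]
    nlinarith [sq_nonneg ε]
  calc Real.sqrt (∑ i, ((-(ε • ω)) i) ^ 2)
      ≤ Real.sqrt (d * (ε ^ 2 * (1/4))) := by
        apply Real.sqrt_le_sqrt
        calc ∑ i, ((-(ε • ω)) i) ^ 2 ≤ ∑ _i : Fin d, ε ^ 2 * (1/4) :=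
              Finset.sum_le_sum h1
          _ = d * (ε ^ 2 * (1/4)) := by simp [Finset.sum_const, nsmul_eq_mul]
    _ = Real.sqrt d / 2 * ε := by
        rw [Real.sqrt_mul (Nat.cast_nonneg d)]
        rw [show ε ^ 2 * (1/4) = (ε/2)^2 by ring, Real.sqrt_sq (by linarith)]
        ring

lemma step1 (hφ : ContDiff ℝ 1 φ) (hε : 0 < ε) (x : Fin d → ℝ) :
    (‖steklov d ε φ x - φ x‖₊ : ℝ≥0∞) ≤
      ENNReal.ofReal (Real.sqrt d / 2 * ε) *
        ∫⁻ ω in cube d, ∫⁻ t in Set.Ioc (0:ℝ) 1,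
          (‖gradNorm d φ (x - t • (ε • ω))‖₊ : ℝ≥0∞) := by
  set C := ENNReal.ofReal (Real.sqrt d / 2 * ε) with hCdef
  have hC : C ≠ ⊤ := ENNReal.ofReal_ne_top
  have hIφ : IntegrableOn (fun ω => φ (x - ε • ω)) (cube d) volume := by
    have hc : Continuous fun ω : Fin d → ℝ => φ (x - ε • ω) := by
      have := hφ.continuous; fun_prop
    exact ((hc.continuousOn).integrableOn_compact isCompact_Icc).mono_set (cube_subset d)
  have e1 : steklov d ε φ x - φ x = ∫ ω in cube d, (φ (x - ε • ω) - φ x) := by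
    rw [integral_sub hIφ
      (integrableOn_const (by rw [cube_volume]; exact ENNReal.one_ne_top))]
    simp [steklov, setIntegral_const, measureReal_def, cube_volume]
  have hbound : ∀ ω ∈ cube d, (‖φ (x - ε • ω) - φ x‖₊ : ℝ≥0∞) ≤
      C * ∫⁻ t in Set.Ioc (0:ℝ) 1, (‖gradNorm d φ (x - t • (ε • ω))‖₊ : ℝ≥0∞) := by
    intro ω hω
    have e2 : φ (x - ε • ω) - φ x
        = ∫ t in Set.Ioc (0:ℝ) 1, fderiv ℝ φ (x - t • (ε • ω)) (-(ε • ω)) := by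
      rw [ftc hφ x (ε • ω), intervalIntegral.integral_of_le zero_le_one]
    rw [e2]
    calc (‖∫ t in Set.Ioc (0:ℝ) 1, fderiv ℝ φ (x - t • (ε • ω)) (-(ε • ω))‖₊ : ℝ≥0∞)
        ≤ ∫⁻ t in Set.Ioc (0:ℝ) 1, ‖fderiv ℝ φ (x - t • (ε • ω)) (-(ε • ω))‖₊ :=
          enorm_integral_le_lintegral_enorm _
      _ ≤ ∫⁻ t in Set.Ioc (0:ℝ) 1,
            C * (‖gradNorm d φ (x - t • (ε • ω))‖₊ : ℝ≥0∞) := by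
          refine lintegral_mono fun t => ?_
          rw [← enorm_eq_nnnorm, Real.enorm_eq_ofReal_abs]
          refine le_trans (ENNReal.ofReal_le_ofReal ((cauchy _ _).trans
            (mul_le_mul_of_nonneg_right (vec_bound hε hω) (gradNorm_nonneg _)))) ?_
          rw [ENNReal.ofReal_mul (by positivity), ← enorm_eq_nnnorm, Real.enorm_eq_ofReal (gradNorm_nonneg _)]
      _ = C * ∫⁻ t in Set.Ioc (0:ℝ) 1, (‖gradNorm d φ (x - t • (ε • ω))‖₊ : ℝ≥0∞) :=
          lintegral_const_mul' _ _ hC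
  calc (‖steklov d ε φ x - φ x‖₊ : ℝ≥0∞)
      = ‖∫ ω in cube d, (φ (x - ε • ω) - φ x)‖₊ := by rw [e1]
    _ ≤ ∫⁻ ω in cube d, ‖φ (x - ε • ω) - φ x‖₊ :=
        enorm_integral_le_lintegral_enorm _
    _ ≤ ∫⁻ ω in cube d, C * ∫⁻ t in Set.Ioc (0:ℝ) 1,
          (‖gradNorm d φ (x - t • (ε • ω))‖₊ : ℝ≥0∞) :=
        lintegral_mono_ae ((ae_restrict_iff' (cube_meas d)).2 (ae_of_all _ hbound))
    _ = C * _ := lintegral_const_mul' _ _ hC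

end SteklovAux

open SteklovAux

/-- For every `ε > 0` and every `C¹` function `φ : ℝ^d → ℝ` with
`φ` and `|∇φ|` in `L²(ℝ^d)`, one has `‖S^ε φ - φ‖_{L²} ≤ (√d / 2) ε ‖∇φ‖_{L²}`. -/
theorem statement2 {d : ℕ} (ε : ℝ) (hε : 0 < ε)
    (φ : (Fin d → ℝ) → ℝ) (hφ : ContDiff ℝ 1 φ)
    (hφ2 : MemLp φ 2 volume) (hgrad : MemLp (gradNorm d φ) 2 volume) :
    eLpNorm (fun x => steklov d ε φ x - φ x) 2 volume ≤
      ENNReal.ofReal (Real.sqrt d / 2 * ε) * eLpNorm (gradNorm d φ) 2 volume := by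
  classical
  set C := ENNReal.ofReal (Real.sqrt d / 2 * ε) with hCdef
  have hC : C ≠ ⊤ := ENNReal.ofReal_ne_top
  set G : (Fin d → ℝ) → ℝ≥0∞ := fun y => (‖gradNorm d φ y‖₊ : ℝ≥0∞) with hGdef
  have hGcont : Continuous G := by
    rw [hGdef]
    exact ENNReal.continuous_coe.comp (continuous_gradNorm hφ).nnnorm
  set ν : Measure ((Fin d → ℝ) × ℝ) :=
    (volume.restrict (cube d)).prod (volume.restrict (Set.Ioc (0:ℝ) 1)) with hνdef
  have hν : ν Set.univ = 1 := by
    rw [hνdef, ← Set.univ_prod_univ, Measure.prod_prod, Measure.restrict_apply_univ,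
      Measure.restrict_apply_univ, cube_volume, Real.volume_Ioc]
    norm_num
  set f : (Fin d → ℝ) → ((Fin d → ℝ) × ℝ) → ℝ≥0∞ :=
    fun x p => G (x - p.2 • (ε • p.1)) with hfdef
  have hfc : Continuous fun q : (Fin d → ℝ) × ((Fin d → ℝ) × ℝ) => f q.1 q.2 := by
    apply hGcont.comp
    fun_prop
  have hprod : ∀ x, (∫⁻ ω in cube d, ∫⁻ t in Set.Ioc (0:ℝ) 1,
      G (x - t • (ε • ω))) = ∫⁻ p, f x p ∂ν := by
    intro x
    rw [hνdef, lintegral_prod]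
    exact (hGcont.comp (by fun_prop : Continuous fun p : (Fin d → ℝ) × ℝ =>
      x - p.2 • (ε • p.1))).measurable.aemeasurable
  have jensen : ∀ x, (∫⁻ p, f x p ∂ν) ^ (2:ℝ) ≤ ∫⁻ p, f x p ^ (2:ℝ) ∂ν := by
    intro x
    have hmeas : AEMeasurable (fun p => f x p) ν :=
      (hGcont.comp (by fun_prop : Continuous fun p : (Fin d → ℝ) × ℝ =>
        x - p.2 • (ε • p.1))).measurable.aemeasurable
    have h := ENNReal.lintegral_mul_le_Lp_mul_Lq ν
      (Real.holderConjugate_iff.2 ⟨one_lt_two, by norm_num⟩ : (2:ℝ).HolderConjugate 2) hmeas aemeasurable_const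
      (g := fun _ => 1)
    simp only [mul_one, ENNReal.one_rpow, lintegral_const, hν, one_mul] at h
    calc (∫⁻ p, f x p ∂ν) ^ (2:ℝ)
        ≤ ((∫⁻ p, f x p ^ (2:ℝ) ∂ν) ^ (1/(2:ℝ))) ^ (2:ℝ) :=
          ENNReal.rpow_le_rpow (by simpa using h) (by norm_num)
      _ = ∫⁻ p, f x p ^ (2:ℝ) ∂ν := by
          rw [← ENNReal.rpow_mul]; norm_num
  have h_trans : ∀ a : Fin d → ℝ, (∫⁻ x, G (x - a) ^ (2:ℝ)) = ∫⁻ x, G x ^ (2:ℝ) := by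
    intro a
    have := lintegral_add_right_eq_self (μ := (volume : Measure (Fin d → ℝ)))
      (fun x => G x ^ (2:ℝ)) (-a)
    simpa [sub_eq_add_neg] using this
  have key : (∫⁻ x, (‖steklov d ε φ x - φ x‖₊ : ℝ≥0∞) ^ (2:ℝ)) ≤
      C ^ (2:ℝ) * ∫⁻ x, G x ^ (2:ℝ) := by
    have hC2 : C ^ (2:ℝ) ≠ ⊤ := ENNReal.rpow_ne_top_of_nonneg (by norm_num) hC
    calc (∫⁻ x, (‖steklov d ε φ x - φ x‖₊ : ℝ≥0∞) ^ (2:ℝ))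
        ≤ ∫⁻ x, (C * ∫⁻ p, f x p ∂ν) ^ (2:ℝ) := by
          refine lintegral_mono fun x => ENNReal.rpow_le_rpow ?_ (by norm_num)
          exact (step1 hφ hε x).trans_eq (by rw [hprod x])
      _ = ∫⁻ x, C ^ (2:ℝ) * (∫⁻ p, f x p ∂ν) ^ (2:ℝ) := by
          simp_rw [ENNReal.mul_rpow_of_nonneg _ _ (by norm_num : (0:ℝ) ≤ 2)]
      _ ≤ ∫⁻ x, C ^ (2:ℝ) * ∫⁻ p, f x p ^ (2:ℝ) ∂ν :=
          lintegral_mono fun x => mul_le_mul_right (jensen x) _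
      _ = C ^ (2:ℝ) * ∫⁻ x, ∫⁻ p, f x p ^ (2:ℝ) ∂ν :=
          lintegral_const_mul' _ _ hC2
      _ = C ^ (2:ℝ) * ∫⁻ p, (∫⁻ x, f x p ^ (2:ℝ)) ∂ν := by
          rw [lintegral_lintegral_swap]
          exact ((hfc.measurable.comp measurable_id).aemeasurable).pow_const (2:ℝ)
      _ = C ^ (2:ℝ) * ∫⁻ _p, (∫⁻ x, G x ^ (2:ℝ)) ∂ν := by
          congr 1
          exact lintegral_congr fun p => h_trans _
      _ = C ^ (2:ℝ) * ∫⁻ x, G x ^ (2:ℝ) := by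
          rw [lintegral_const, hν, mul_one]
  rw [eLpNorm_eq_lintegral_rpow_enorm_toReal two_ne_zero ENNReal.ofNat_ne_top,
    eLpNorm_eq_lintegral_rpow_enorm_toReal two_ne_zero ENNReal.ofNat_ne_top]
  simp only [ENNReal.toReal_ofNat]
  calc (∫⁻ x, (‖steklov d ε φ x - φ x‖₊ : ℝ≥0∞) ^ (2:ℝ)) ^ (1/(2:ℝ))
      ≤ (C ^ (2:ℝ) * ∫⁻ x, G x ^ (2:ℝ)) ^ (1/(2:ℝ)) :=
        ENNReal.rpow_le_rpow key (by norm_num)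
    _ = C * (∫⁻ x, G x ^ (2:ℝ)) ^ (1/(2:ℝ)) := by
        rw [ENNReal.mul_rpow_of_nonneg _ _ (by norm_num : (0:ℝ) ≤ 1/2),
          ← ENNReal.rpow_mul]
        norm_num
end
end

section
/- There exists a constant C depending only on the dimension d such that for every ε > 0 and every twice continuously differentiable function φ : ℝ^d → ℝ such that φ and the pointwise norm of its Hessian |∇²φ| both belong to L²(ℝ^d), one has ‖S^ε φ − φ‖_{L²} ≤ C ε² ‖∇²φ‖_{L²}. -/
open MeasureTheory

noncomputable section

/-- Pointwise Euclidean (Frobenius) norm of the Hessian: `|∇²φ(x)|`. -/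
def hessNorm (d : ℕ) (φ : (Fin d → ℝ) → ℝ) (x : Fin d → ℝ) : ℝ :=
  Real.sqrt (∑ i, ∑ j, (pd d i (pd d j φ) x) ^ 2)

namespace Statement3Aux

open scoped ENNReal

variable {d : ℕ} {φ : (Fin d → ℝ) → ℝ}

/-- The open cube. -/
def openCube (d : ℕ) : Set (Fin d → ℝ) := Set.univ.pi fun _ => Set.Ioo (-(1:ℝ)/2) (1/2)

lemma measurable_cube : MeasurableSet (cube d) :=
  MeasurableSet.univ_pi fun _ => measurableSet_Ico

lemma measurable_openCube : MeasurableSet (openCube d) :=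
  MeasurableSet.univ_pi fun _ => measurableSet_Ioo

lemma volume_cube : volume (cube d) = 1 := by
  rw [cube, volume_pi_pi]
  simp [Real.volume_Ico]
  norm_num

lemma volume_openCube : volume (openCube d) = 1 := by
  rw [openCube, volume_pi_pi]
  simp [Real.volume_Ioo]
  norm_num

lemma restrict_cube_eq : (volume : Measure (Fin d → ℝ)).restrict (cube d)
    = volume.restrict (openCube d) := by
  apply Measure.restrict_congr_set
  rw [MeasureTheory.ae_eq_set]
  constructor
  · have hsub : openCube d ⊆ cube d := by
      intro x hx i hi
      exact Set.Ioo_subset_Ico_self (hx i hi)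
    have := measure_diff hsub measurable_openCube.nullMeasurableSet
      (by rw [volume_openCube]; exact ENNReal.one_ne_top)
    rw [this, volume_cube, volume_openCube, tsub_self]
  · have hsub : openCube d ⊆ cube d := by
      intro x hx i hi
      exact Set.Ioo_subset_Ico_self (hx i hi)
    rw [Set.diff_eq_empty.2 hsub, measure_empty]

lemma openCube_subset_Icc :
    openCube d ⊆ Set.Icc (fun _ => -(1:ℝ)/2) (fun _ => (1:ℝ)/2) := by
  intro x hx
  rw [← Set.pi_univ_Icc]
  intro i hi
  exact Set.Ioo_subset_Icc_self (hx i hi)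

lemma integrableOn_openCube {f : (Fin d → ℝ) → ℝ} (hf : Continuous f) :
    IntegrableOn f (openCube d) volume := by
  have : IntegrableOn f (Set.Icc (fun _ => -(1:ℝ)/2) (fun _ => (1:ℝ)/2)) volume :=
    hf.continuousOn.integrableOn_compact isCompact_Icc
  exact this.mono_set openCube_subset_Icc

lemma integrableOn_openCube_vec {f : (Fin d → ℝ) → (Fin d → ℝ)} (hf : Continuous f) :
    IntegrableOn f (openCube d) volume := by
  have : IntegrableOn f (Set.Icc (fun _ => -(1:ℝ)/2) (fun _ => (1:ℝ)/2)) volume :=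
    hf.continuousOn.integrableOn_compact isCompact_Icc
  exact this.mono_set openCube_subset_Icc

lemma neg_mem_openCube {x : Fin d → ℝ} (hx : x ∈ openCube d) : -x ∈ openCube d := by
  intro i hi
  have := hx i hi
  simp only [Set.mem_Ioo] at this ⊢
  simp only [Pi.neg_apply]
  constructor <;> linarith [this.1, this.2]

lemma integral_openCube_id : (∫ ω in openCube d, ω ∂(volume : Measure (Fin d → ℝ))) = 0 := by
  rw [← integral_indicator measurable_openCube]
  set F : (Fin d → ℝ) → (Fin d → ℝ) := (openCube d).indicator (fun ω => ω) with hF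
  have hodd : ∀ y, F (-y) = - F y := by
    intro y
    by_cases hy : y ∈ openCube d
    · have : -y ∈ openCube d := neg_mem_openCube hy
      simp [hF, Set.indicator_of_mem, hy, this]
    · have : -y ∉ openCube d := by
        intro h
        exact hy (by simpa using neg_mem_openCube h)
      simp [hF, Set.indicator_of_notMem, hy, this]
  have h1 : ∫ y, F (-y) = ∫ y, F y := integral_neg_eq_self F volume
  have h2 : ∫ y, F (-y) = - ∫ y, F y := by
    simp_rw [hodd]
    exact integral_neg F
  have h : (∫ y, F y) = - ∫ y, F y := h1.symm.trans h2
  have h2' : (2:ℝ) • (∫ y, F y) = 0 := by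
    rw [two_smul]
    nth_rewrite 1 [h]
    exact neg_add_cancel _
  exact (smul_eq_zero.1 h2').resolve_left (by norm_num)

section Calc

variable (hφ : ContDiff ℝ 2 φ)

lemma fderiv_apply_sum (f : (Fin d → ℝ) → ℝ) (y v : Fin d → ℝ) :
    fderiv ℝ f y v = ∑ i, v i * pd d i f y := by
  have hv : v = ∑ i, v i • (Pi.single i 1 : Fin d → ℝ) := by
    conv_lhs => rw [← Finset.univ_sum_single v]
    congr 1
    funext i
    ext j
    by_cases h : j = i <;> simp [Pi.single_apply, h]
  conv_lhs => rw [hv]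
  rw [map_sum]
  congr 1
  funext i
  simp only [_root_.map_smul, smul_eq_mul]
  rfl

include hφ

lemma contDiff_fderiv_apply (v : Fin d → ℝ) :
    ContDiff ℝ 1 (fun y => fderiv ℝ φ y v) := by
  have h1 : ContDiff ℝ 1 (fderiv ℝ φ) := hφ.fderiv_right (by norm_num)
  exact (ContinuousLinearMap.apply ℝ ℝ v).contDiff.comp h1

lemma contDiff_pd (j : Fin d) : ContDiff ℝ 1 (pd d j φ) :=
  contDiff_fderiv_apply hφ (Pi.single j 1)

lemma continuous_pd2 (i j : Fin d) : Continuous (pd d i (pd d j φ)) := by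
  have h1 : Continuous (fderiv ℝ (pd d j φ)) :=
    (contDiff_pd hφ j).continuous_fderiv one_ne_zero
  exact h1.clm_apply continuous_const

lemma continuous_hessNorm : Continuous (hessNorm d φ) := by
  unfold hessNorm
  apply Real.continuous_sqrt.comp
  apply continuous_finset_sum
  intro i _
  apply continuous_finset_sum
  intro j _
  exact (continuous_pd2 hφ i j).pow 2

lemma pd2_le_hessNorm (i j : Fin d) (y : Fin d → ℝ) :
    |pd d i (pd d j φ) y| ≤ hessNorm d φ y := by
  rw [← Real.sqrt_sq_eq_abs]
  apply Real.sqrt_le_sqrt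
  calc pd d i (pd d j φ) y ^ 2
      ≤ ∑ j', pd d i (pd d j' φ) y ^ 2 :=
        Finset.single_le_sum (f := fun j' => pd d i (pd d j' φ) y ^ 2)
          (fun k _ => sq_nonneg _) (Finset.mem_univ j)
    _ ≤ ∑ i', ∑ j', pd d i' (pd d j' φ) y ^ 2 :=
        Finset.single_le_sum (f := fun i' => ∑ j', pd d i' (pd d j' φ) y ^ 2)
          (fun k _ => Finset.sum_nonneg fun _ _ => sq_nonneg _) (Finset.mem_univ i)

lemma second_deriv_bound (u y : Fin d → ℝ) :
    |fderiv ℝ (fun z => fderiv ℝ φ z u) y u| ≤ (∑ i, |u i|) ^ 2 * hessNorm d φ y := by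
  have hψ : (fun z => fderiv ℝ φ z u) = fun z => ∑ j, u j * pd d j φ z := by
    funext z
    exact fderiv_apply_sum φ z u
  rw [hψ]
  have hdiff : ∀ j ∈ Finset.univ, DifferentiableAt ℝ (fun z => u j * pd d j φ z) y :=
    fun j _ => (((contDiff_pd hφ j).differentiable one_ne_zero) y).const_mul (u j)
  rw [fderiv_fun_sum hdiff]
  rw [ContinuousLinearMap.sum_apply]
  have hterm : ∀ j, (fderiv ℝ (fun z => u j * pd d j φ z) y) u
      = u j * ∑ i, u i * pd d i (pd d j φ) y := by
    intro j
    rw [fderiv_const_mul (((contDiff_pd hφ j).differentiable one_ne_zero) y)]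
    rw [ContinuousLinearMap.smul_apply]
    rw [fderiv_apply_sum (pd d j φ) y u]
    rfl
  calc |∑ j, (fderiv ℝ (fun z => u j * pd d j φ z) y) u|
      ≤ ∑ j, |(fderiv ℝ (fun z => u j * pd d j φ z) y) u| := Finset.abs_sum_le_sum_abs _ _
    _ ≤ ∑ j, |u j| * ((∑ i, |u i|) * hessNorm d φ y) := by
        apply Finset.sum_le_sum
        intro j _
        rw [hterm j, abs_mul]
        apply mul_le_mul_of_nonneg_left _ (abs_nonneg _)
        calc |∑ i, u i * pd d i (pd d j φ) y|
            ≤ ∑ i, |u i * pd d i (pd d j φ) y| := Finset.abs_sum_le_sum_abs _ _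
          _ ≤ ∑ i, |u i| * hessNorm d φ y := by
              apply Finset.sum_le_sum
              intro i _
              rw [abs_mul]
              exact mul_le_mul_of_nonneg_left (pd2_le_hessNorm hφ i j y) (abs_nonneg _)
          _ = (∑ i, |u i|) * hessNorm d φ y := by rw [Finset.sum_mul]
    _ = (∑ i, |u i|) ^ 2 * hessNorm d φ y := by
        rw [← Finset.sum_mul]
        ring

lemma taylor_bound (x u : Fin d → ℝ) :
    |φ (x + u) - φ x - fderiv ℝ φ x u|
      ≤ (∑ i, |u i|) ^ 2 * ∫ s in (0:ℝ)..1, hessNorm d φ (x + s • u) := by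
  set c : ℝ → (Fin d → ℝ) := fun t => x + t • u with hc_def
  set ψ : (Fin d → ℝ) → ℝ := fun z => fderiv ℝ φ z u with hψ_def
  set M : ℝ := ∑ i, |u i| with hM_def
  set K : ℝ := ∫ s in (0:ℝ)..1, hessNorm d φ (x + s • u) with hK_def
  have hc : ∀ t : ℝ, HasDerivAt c u t := by
    intro t
    have : HasDerivAt (fun t : ℝ => t • u) ((1:ℝ) • u) t := (hasDerivAt_id t).smul_const u
    exact (by simpa using this : HasDerivAt (fun t : ℝ => t • u) u t).const_add x
  have hcont_c : Continuous c := by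
    apply continuous_const.add (continuous_id.smul continuous_const)
  have hφd : Differentiable ℝ φ := hφ.differentiable (by norm_num)
  have hg : ∀ t : ℝ, HasDerivAt (fun t => φ (c t)) (ψ (c t)) t := by
    intro t
    exact (hφd (c t)).hasFDerivAt.comp_hasDerivAt t (hc t)
  have hψc : ContDiff ℝ 1 ψ := contDiff_fderiv_apply hφ u
  have hcont_ψc : Continuous (fun t => ψ (c t)) :=
    (hψc.continuous).comp hcont_c
  set D : ℝ → ℝ := fun s => fderiv ℝ ψ (c s) u with hD_def
  have hh : ∀ s : ℝ, HasDerivAt (fun t => ψ (c t)) (D s) s := by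
    intro s
    exact ((hψc.differentiable one_ne_zero) (c s)).hasFDerivAt.comp_hasDerivAt s (hc s)
  have hcont_D : Continuous D := by
    have h1 : Continuous (fderiv ℝ ψ) := hψc.continuous_fderiv one_ne_zero
    exact (h1.comp hcont_c).clm_apply continuous_const
  have hcont_H : Continuous (hessNorm d φ) := continuous_hessNorm hφ
  have hcont_Hc : Continuous (fun s => hessNorm d φ (c s)) := hcont_H.comp hcont_c
  -- FTC 1
  have ftc1 : ∫ t in (0:ℝ)..1, ψ (c t) = φ (c 1) - φ (c 0) :=
    intervalIntegral.integral_eq_sub_of_hasDerivAt (fun t _ => hg t)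
      (hcont_ψc.intervalIntegrable 0 1)
  have hc0 : c 0 = x := by simp [hc_def]
  have hc1 : c 1 = x + u := by simp [hc_def]
  have key : φ (x + u) - φ x - fderiv ℝ φ x u
      = ∫ t in (0:ℝ)..1, (ψ (c t) - ψ (c 0)) := by
    rw [intervalIntegral.integral_sub (hcont_ψc.intervalIntegrable 0 1)
      (intervalIntegrable_const), ftc1, hc0, hc1]
    simp [hψ_def, hc0]
  rw [key]
  -- bound for each t in [0,1]
  have hDbound : ∀ s : ℝ, |D s| ≤ M ^ 2 * hessNorm d φ (c s) := by
    intro s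
    exact second_deriv_bound hφ u (c s)
  have hKnonneg : 0 ≤ K := by
    rw [hK_def]
    apply intervalIntegral.integral_nonneg (by norm_num)
    intro s _
    exact Real.sqrt_nonneg _
  have habs_int : ∀ t ∈ Set.Icc (0:ℝ) 1, |ψ (c t) - ψ (c 0)| ≤ M ^ 2 * K := by
    intro t ht
    have ftc2 : ∫ s in (0:ℝ)..t, D s = ψ (c t) - ψ (c 0) :=
      intervalIntegral.integral_eq_sub_of_hasDerivAt (fun s _ => hh s)
        (hcont_D.intervalIntegrable 0 t)
    rw [← ftc2]
    calc |∫ s in (0:ℝ)..t, D s|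
        ≤ ∫ s in (0:ℝ)..t, |D s| := intervalIntegral.abs_integral_le_integral_abs ht.1
      _ ≤ ∫ s in (0:ℝ)..1, |D s| := by
          have hsplit : (∫ s in (0:ℝ)..t, |D s|) + ∫ s in t..1, |D s| = ∫ s in (0:ℝ)..1, |D s| :=
            intervalIntegral.integral_add_adjacent_intervals (μ := volume)
              (hcont_D.abs.intervalIntegrable 0 t) (hcont_D.abs.intervalIntegrable t 1)
          have hpos : 0 ≤ ∫ s in t..1, |D s| :=
            intervalIntegral.integral_nonneg ht.2 (fun s _ => abs_nonneg _)
          linarith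
      _ ≤ ∫ s in (0:ℝ)..1, M ^ 2 * hessNorm d φ (c s) := by
          apply intervalIntegral.integral_mono_on (by norm_num)
            (hcont_D.abs.intervalIntegrable 0 1)
            ((continuous_const.mul hcont_Hc).intervalIntegrable 0 1)
          intro s _
          exact hDbound s
      _ = M ^ 2 * K := by
          rw [hK_def, intervalIntegral.integral_const_mul]
  calc |∫ t in (0:ℝ)..1, (ψ (c t) - ψ (c 0))|
      ≤ ∫ t in (0:ℝ)..1, |ψ (c t) - ψ (c 0)| :=
        intervalIntegral.abs_integral_le_integral_abs (by norm_num)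
    _ ≤ ∫ t in (0:ℝ)..1, M ^ 2 * K := by
        apply intervalIntegral.integral_mono_on (by norm_num)
          ((hcont_ψc.sub continuous_const).abs.intervalIntegrable 0 1)
          (intervalIntegrable_const)
        exact habs_int
    _ = M ^ 2 * K := by simp

end Calc


section MeasurePart

variable (hφ : ContDiff ℝ 2 φ)

include hφ

lemma steklov_sub_eq (ε : ℝ) (x : Fin d → ℝ) :
    steklov d ε φ x - φ x
      = ∫ ω in openCube d, (φ (x - ε • ω) - φ x + fderiv ℝ φ x (ε • ω)) := by
  have hφc : Continuous φ := hφ.continuous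
  have h1 : IntegrableOn (fun ω => φ (x - ε • ω)) (openCube d) volume :=
    integrableOn_openCube (hφc.comp (continuous_const.sub (continuous_id.const_smul ε)))
  have h2 : IntegrableOn (fun ω : Fin d → ℝ => fderiv ℝ φ x (ε • ω)) (openCube d) volume :=
    integrableOn_openCube ((fderiv ℝ φ x).continuous.comp (continuous_id.const_smul ε))
  have h3 : IntegrableOn (fun ω : Fin d → ℝ => ε • ω) (openCube d) volume :=
    integrableOn_openCube_vec (continuous_id.const_smul ε)
  have hconst : IntegrableOn (fun _ : Fin d → ℝ => φ x) (openCube d) volume := by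
    exact integrableOn_const (by rw [volume_openCube]; exact ENNReal.one_ne_top)
  have e1 : steklov d ε φ x = ∫ ω in openCube d, φ (x - ε • ω) := by
    rw [steklov, restrict_cube_eq]
  have e2 : (∫ _ω in openCube d, φ x ∂(volume : Measure (Fin d → ℝ))) = φ x := by
    rw [setIntegral_const, measureReal_def, volume_openCube]
    simp
  have e3 : (∫ ω in openCube d, fderiv ℝ φ x (ε • ω) ∂(volume : Measure (Fin d → ℝ))) = 0 := by
    rw [ContinuousLinearMap.integral_comp_comm _ h3, integral_smul, integral_openCube_id]
    simp
  have h12 : IntegrableOn (fun ω => φ (x - ε • ω) - φ x) (openCube d) volume := h1.sub hconst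
  rw [integral_add h12 h2, integral_sub h1 hconst, e1, e2, e3, add_zero]

omit hφ in
lemma abs_sum_le (ε : ℝ) (hε : 0 < ε) {ω : Fin d → ℝ} (hω : ω ∈ openCube d) :
    ∑ i, |(-(ε • ω)) i| ≤ (d:ℝ)/2 * ε := by
  have : ∀ i, |(-(ε • ω)) i| ≤ ε * (1/2) := by
    intro i
    have hi := hω i (Set.mem_univ i)
    simp only [Set.mem_Ioo] at hi
    have : |ω i| ≤ 1/2 := by
      rw [abs_le]; constructor <;> linarith [hi.1, hi.2]
    calc |(-(ε • ω)) i| = ε * |ω i| := by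
          simp [abs_mul, abs_of_pos hε]
      _ ≤ ε * (1/2) := by
          exact mul_le_mul_of_nonneg_left this hε.le
  calc ∑ i, |(-(ε • ω)) i| ≤ ∑ _i : Fin d, ε * (1/2) := Finset.sum_le_sum fun i _ => this i
    _ = (d:ℝ) * (ε * (1/2)) := by simp [Finset.sum_const]
    _ = (d:ℝ)/2 * ε := by ring

lemma pointwise_bound {ε : ℝ} (hε : 0 < ε) (x : Fin d → ℝ) :
    (‖steklov d ε φ x - φ x‖₊ : ℝ≥0∞)
      ≤ ENNReal.ofReal (((d:ℝ)/2 * ε)^2)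
        * ∫⁻ ω in openCube d, ∫⁻ s in Set.Icc (0:ℝ) 1,
            ENNReal.ofReal (hessNorm d φ (x - (s*ε) • ω)) := by
  have hcont_H : Continuous (hessNorm d φ) := continuous_hessNorm hφ
  have hc_nonneg : (0:ℝ) ≤ ((d:ℝ)/2 * ε)^2 := sq_nonneg _
  have hpt : ∀ ω ∈ openCube d,
      (‖φ (x - ε • ω) - φ x + fderiv ℝ φ x (ε • ω)‖₊ : ℝ≥0∞)
        ≤ ENNReal.ofReal (((d:ℝ)/2 * ε)^2)
          * ∫⁻ s in Set.Icc (0:ℝ) 1, ENNReal.ofReal (hessNorm d φ (x - (s*ε) • ω)) := by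
    intro ω hω
    have htay := taylor_bound hφ x (-(ε • ω))
    have heq1 : φ (x + -(ε • ω)) = φ (x - ε • ω) := by rw [← sub_eq_add_neg]
    have heq2 : fderiv ℝ φ x (-(ε • ω)) = - fderiv ℝ φ x (ε • ω) := map_neg _ _
    have heq3 : ∀ s : ℝ, x + s • (-(ε • ω)) = x - (s*ε) • ω := by
      intro s
      rw [smul_neg, smul_smul, ← sub_eq_add_neg]
    rw [heq1, heq2, sub_neg_eq_add] at htay
    simp_rw [heq3] at htay
    set K : ℝ := ∫ s in (0:ℝ)..1, hessNorm d φ (x - (s*ε) • ω) with hK_def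
    have hKnn : 0 ≤ K :=
      intervalIntegral.integral_nonneg (by norm_num) (fun s _ => Real.sqrt_nonneg _)
    have hM : (∑ i, |(-(ε • ω)) i|)^2 ≤ ((d:ℝ)/2 * ε)^2 := by
      apply sq_le_sq'
      · have h0 : (0:ℝ) ≤ ∑ i, |(-(ε • ω)) i| := Finset.sum_nonneg fun i _ => abs_nonneg _
        have h1 : (0:ℝ) ≤ (d:ℝ)/2 * ε := by positivity
        linarith
      · exact abs_sum_le ε hε hω
    have hbound : |φ (x - ε • ω) - φ x + fderiv ℝ φ x (ε • ω)| ≤ ((d:ℝ)/2 * ε)^2 * K :=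
      htay.trans (mul_le_mul_of_nonneg_right hM hKnn)
    have hcont1 : Continuous fun s : ℝ => hessNorm d φ (x - (s*ε) • ω) := by
      apply hcont_H.comp
      exact continuous_const.sub ((continuous_id.mul continuous_const).smul continuous_const)
    have hKof : ENNReal.ofReal K
        ≤ ∫⁻ s in Set.Icc (0:ℝ) 1, ENNReal.ofReal (hessNorm d φ (x - (s*ε) • ω)) := by
      rw [hK_def, intervalIntegral.integral_of_le (by norm_num : (0:ℝ) ≤ 1)]
      rw [ofReal_integral_eq_lintegral_ofReal
        ((hcont1.integrableOn_Icc).mono_set Set.Ioc_subset_Icc_self)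
        (Filter.Eventually.of_forall fun s => Real.sqrt_nonneg _)]
      exact lintegral_mono_set Set.Ioc_subset_Icc_self
    calc (‖φ (x - ε • ω) - φ x + fderiv ℝ φ x (ε • ω)‖₊ : ℝ≥0∞)
        = ENNReal.ofReal |φ (x - ε • ω) - φ x + fderiv ℝ φ x (ε • ω)| := by
          rw [← Real.norm_eq_abs, ofReal_norm]
          rfl
      _ ≤ ENNReal.ofReal (((d:ℝ)/2 * ε)^2 * K) := ENNReal.ofReal_le_ofReal hbound
      _ = ENNReal.ofReal (((d:ℝ)/2 * ε)^2) * ENNReal.ofReal K := ENNReal.ofReal_mul hc_nonneg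
      _ ≤ _ := mul_le_mul_right hKof _
  rw [steklov_sub_eq hφ ε x]
  calc (‖∫ ω in openCube d, (φ (x - ε • ω) - φ x + fderiv ℝ φ x (ε • ω))‖₊ : ℝ≥0∞)
      ≤ ∫⁻ ω in openCube d, (‖φ (x - ε • ω) - φ x + fderiv ℝ φ x (ε • ω)‖₊ : ℝ≥0∞) :=
        enorm_integral_le_lintegral_enorm _
    _ ≤ ∫⁻ ω in openCube d, ENNReal.ofReal (((d:ℝ)/2 * ε)^2)
          * ∫⁻ s in Set.Icc (0:ℝ) 1, ENNReal.ofReal (hessNorm d φ (x - (s*ε) • ω)) :=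
        lintegral_mono_ae (ae_restrict_of_forall_mem measurable_openCube hpt)
    _ = _ := lintegral_const_mul' _ _ ENNReal.ofReal_ne_top

lemma lintegral_G_sq_le (ε : ℝ) :
    ∫⁻ x, (∫⁻ ω in openCube d, ∫⁻ s in Set.Icc (0:ℝ) 1,
        ENNReal.ofReal (hessNorm d φ (x - (s*ε) • ω))) ^ (2:ℝ)
      ≤ ∫⁻ x, ENNReal.ofReal (hessNorm d φ x) ^ (2:ℝ) := by
  have hcont_H : Continuous (hessNorm d φ) := continuous_hessNorm hφ
  haveI i1 : IsProbabilityMeasure ((volume : Measure (Fin d → ℝ)).restrict (openCube d)) :=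
    ⟨by rw [Measure.restrict_apply_univ]; exact volume_openCube⟩
  haveI i2 : IsProbabilityMeasure ((volume : Measure ℝ).restrict (Set.Icc (0:ℝ) 1)) :=
    ⟨by rw [Measure.restrict_apply_univ, Real.volume_Icc]; norm_num⟩
  set ν : Measure ((Fin d → ℝ) × ℝ) :=
    ((volume : Measure (Fin d → ℝ)).restrict (openCube d)).prod
      ((volume : Measure ℝ).restrict (Set.Icc (0:ℝ) 1)) with hν
  haveI iν : IsProbabilityMeasure ν := by rw [hν]; infer_instance
  have hmeas : ∀ x : Fin d → ℝ, Measurable fun p : (Fin d → ℝ) × ℝ =>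
      ENNReal.ofReal (hessNorm d φ (x - (p.2*ε) • p.1)) := by
    intro x
    apply ENNReal.measurable_ofReal.comp
    apply (hcont_H.comp _).measurable
    exact continuous_const.sub ((continuous_snd.mul continuous_const).smul continuous_fst)
  have hG_eq : ∀ x : Fin d → ℝ,
      (∫⁻ ω in openCube d, ∫⁻ s in Set.Icc (0:ℝ) 1,
        ENNReal.ofReal (hessNorm d φ (x - (s*ε) • ω)))
      = ∫⁻ p, ENNReal.ofReal (hessNorm d φ (x - (p.2*ε) • p.1)) ∂ν := by
    intro x
    rw [hν, lintegral_prod _ (hmeas x).aemeasurable]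
  have hCS : ∀ x : Fin d → ℝ,
      (∫⁻ p, ENNReal.ofReal (hessNorm d φ (x - (p.2*ε) • p.1)) ∂ν) ^ (2:ℝ)
        ≤ ∫⁻ p, ENNReal.ofReal (hessNorm d φ (x - (p.2*ε) • p.1)) ^ (2:ℝ) ∂ν := by
    intro x
    have conj : Real.HolderConjugate 2 2 := Real.HolderConjugate.two_two
    have cs := ENNReal.lintegral_mul_le_Lp_mul_Lq ν conj (hmeas x).aemeasurable
      (aemeasurable_const (b := (1:ℝ≥0∞)))
    simp only [Pi.mul_apply, mul_one, ENNReal.one_rpow, lintegral_one, measure_univ,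
      ENNReal.one_rpow, mul_one] at cs
    calc (∫⁻ p, ENNReal.ofReal (hessNorm d φ (x - (p.2*ε) • p.1)) ∂ν) ^ (2:ℝ)
        ≤ ((∫⁻ p, ENNReal.ofReal (hessNorm d φ (x - (p.2*ε) • p.1)) ^ (2:ℝ) ∂ν)
            ^ ((1:ℝ)/2)) ^ (2:ℝ) := by
          apply ENNReal.rpow_le_rpow _ (by norm_num)
          simpa using cs
      _ = _ := by
          rw [← ENNReal.rpow_mul]
          norm_num
  calc ∫⁻ x, (∫⁻ ω in openCube d, ∫⁻ s in Set.Icc (0:ℝ) 1,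
        ENNReal.ofReal (hessNorm d φ (x - (s*ε) • ω))) ^ (2:ℝ)
      ≤ ∫⁻ x, ∫⁻ p, ENNReal.ofReal (hessNorm d φ (x - (p.2*ε) • p.1)) ^ (2:ℝ) ∂ν := by
        apply lintegral_mono
        intro x
        have h := hCS x
        rw [← hG_eq x] at h
        exact h
    _ = ∫⁻ p, ∫⁻ x, ENNReal.ofReal (hessNorm d φ (x - (p.2*ε) • p.1)) ^ (2:ℝ) ∂volume ∂ν := by
        apply lintegral_lintegral_swap
        apply Measurable.aemeasurable
        apply Measurable.pow_const
        apply ENNReal.measurable_ofReal.comp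
        apply (hcont_H.comp _).measurable
        exact continuous_fst.sub ((continuous_snd.snd.mul continuous_const).smul
          continuous_snd.fst)
    _ = ∫⁻ _p, (∫⁻ x, ENNReal.ofReal (hessNorm d φ x) ^ (2:ℝ) ∂volume) ∂ν := by
        apply lintegral_congr
        intro p
        have mp := measurePreserving_add_right (volume : Measure (Fin d → ℝ)) (-((p.2*ε) • p.1))
        have hgm : Measurable fun x : Fin d → ℝ => ENNReal.ofReal (hessNorm d φ x) ^ (2:ℝ) :=
          Measurable.pow_const (ENNReal.measurable_ofReal.comp hcont_H.measurable) _
        have := mp.lintegral_comp hgm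
        simp only [← sub_eq_add_neg] at this
        exact this
    _ = ∫⁻ x, ENNReal.ofReal (hessNorm d φ x) ^ (2:ℝ) ∂volume := by
        rw [lintegral_const, measure_univ, mul_one]

end MeasurePart

end Statement3Aux

open scoped ENNReal

/-- There is a constant `C = C(d)` such that for every `ε > 0` and every
`C²` function `φ : ℝ^d → ℝ` with `φ` and `|∇²φ|` in `L²(ℝ^d)`,
one has `‖S^ε φ - φ‖_{L²} ≤ C ε² ‖∇²φ‖_{L²}`. -/
theorem statement3 (d : ℕ) :
    ∃ C : ℝ, 0 < C ∧ ∀ ε : ℝ, 0 < ε → ∀ φ : (Fin d → ℝ) → ℝ, ContDiff ℝ 2 φ →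
      MemLp φ 2 volume → MemLp (hessNorm d φ) 2 volume →
      eLpNorm (fun x => steklov d ε φ x - φ x) 2 volume ≤
        ENNReal.ofReal (C * ε ^ 2) * eLpNorm (hessNorm d φ) 2 volume := by
  classical
  refine ⟨((d:ℝ)/2)^2 + 1, by positivity, ?_⟩
  intro ε hε φ hφ _ _
  have h2 : (2:ℝ≥0∞) ≠ 0 := by norm_num
  have h2' : (2:ℝ≥0∞) ≠ ⊤ := by norm_num
  rw [eLpNorm_eq_lintegral_rpow_enorm_toReal h2 h2', eLpNorm_eq_lintegral_rpow_enorm_toReal h2 h2']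
  have htr : (2:ℝ≥0∞).toReal = 2 := by simp
  rw [htr]
  set c : ℝ≥0∞ := ENNReal.ofReal (((d:ℝ)/2 * ε)^2) with hc
  set G : (Fin d → ℝ) → ℝ≥0∞ := fun x => ∫⁻ ω in Statement3Aux.openCube d,
      ∫⁻ s in Set.Icc (0:ℝ) 1, ENNReal.ofReal (hessNorm d φ (x - (s*ε) • ω)) with hG
  have hcne : c ^ (2:ℝ) ≠ ⊤ :=
    ENNReal.rpow_ne_top_of_nonneg (by norm_num) ENNReal.ofReal_ne_top
  have step1 : (∫⁻ x, (‖steklov d ε φ x - φ x‖₊ : ℝ≥0∞) ^ (2:ℝ))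
      ≤ c ^ (2:ℝ) * ∫⁻ x, G x ^ (2:ℝ) := by
    rw [← lintegral_const_mul' _ _ hcne]
    apply lintegral_mono
    intro x
    calc ((‖steklov d ε φ x - φ x‖₊ : ℝ≥0∞)) ^ (2:ℝ)
        ≤ (c * G x) ^ (2:ℝ) :=
          ENNReal.rpow_le_rpow (Statement3Aux.pointwise_bound hφ hε x) (by norm_num)
      _ = c ^ (2:ℝ) * G x ^ (2:ℝ) := ENNReal.mul_rpow_of_nonneg _ _ (by norm_num)
  have step2 : (∫⁻ x, G x ^ (2:ℝ)) ≤ ∫⁻ x, ENNReal.ofReal (hessNorm d φ x) ^ (2:ℝ) :=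
    Statement3Aux.lintegral_G_sq_le hφ ε
  have hHe : ∀ x, (‖hessNorm d φ x‖₊ : ℝ≥0∞) = ENNReal.ofReal (hessNorm d φ x) :=
    fun x => Real.enorm_eq_ofReal (Real.sqrt_nonneg _)
  have hcle : c ≤ ENNReal.ofReal ((((d:ℝ)/2)^2 + 1) * ε ^ 2) := by
    apply ENNReal.ofReal_le_ofReal
    have : ((d:ℝ)/2 * ε)^2 = ((d:ℝ)/2)^2 * ε^2 := by ring
    rw [this]
    nlinarith [sq_nonneg ε, sq_nonneg ((d:ℝ)/2)]
  calc (∫⁻ x, (‖steklov d ε φ x - φ x‖₊ : ℝ≥0∞) ^ (2:ℝ)) ^ ((1:ℝ)/2)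
      ≤ (c ^ (2:ℝ) * ∫⁻ x, ENNReal.ofReal (hessNorm d φ x) ^ (2:ℝ)) ^ ((1:ℝ)/2) := by
        apply ENNReal.rpow_le_rpow _ (by norm_num)
        exact step1.trans (mul_le_mul_right step2 _)
    _ = c * (∫⁻ x, ENNReal.ofReal (hessNorm d φ x) ^ (2:ℝ)) ^ ((1:ℝ)/2) := by
        rw [ENNReal.mul_rpow_of_nonneg _ _ (by norm_num : (0:ℝ) ≤ 1/2), ← ENNReal.rpow_mul]
        norm_num
    _ ≤ ENNReal.ofReal ((((d:ℝ)/2)^2 + 1) * ε ^ 2)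
          * (∫⁻ x, ENNReal.ofReal (hessNorm d φ x) ^ (2:ℝ)) ^ ((1:ℝ)/2) :=
        mul_le_mul_left hcle _
    _ = ENNReal.ofReal ((((d:ℝ)/2)^2 + 1) * ε ^ 2)
          * (∫⁻ x, (‖hessNorm d φ x‖₊ : ℝ≥0∞) ^ (2:ℝ)) ^ ((1:ℝ)/2) := by
        simp_rw [hHe]
end
end

section
/- Let θ : ℝ^d → ℝ be a bounded measurable compactly supported function with θ ≥ 0 and ∫_{ℝ^d} θ(x) dx = 1, and for ε > 0 define the smoothing operator Θ^ε by (Θ^ε φ)(x) = ∫_{ℝ^d} φ(x − εω) θ(ω) dω. Then there exists a constant C depending only on θ and d such that for every ε > 0, every φ ∈ L²(ℝ^d), and every measurable 1-periodic function b : ℝ^d → ℝ with b|_Y ∈ L²(Y), the function x ↦ b^ε(x)(Θ^ε φ)(x) belongs to L²(ℝ^d) and ‖b^ε Θ^ε φ‖_{L²} ≤ C ⟨b²⟩^{1/2} ‖φ‖_{L²}. -/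
open MeasureTheory
open scoped ENNReal Pointwise

noncomputable section

/-- The general smoothing operator with kernel `θ`:
`(Θ^ε φ)(x) = ∫_{ℝ^d} φ(x - εω) θ(ω) dω`. -/
def smoothΘ (d : ℕ) (θ : (Fin d → ℝ) → ℝ) (ε : ℝ) (φ : (Fin d → ℝ) → ℝ)
    (x : Fin d → ℝ) : ℝ :=
  ∫ ω, φ (x - ε • ω) * θ ω

namespace St13


abbrev E (d : ℕ) := Fin d → ℝ

abbrev Lat (d : ℕ) : AddSubgroup (E d) :=
  (Submodule.span ℤ (Set.range ⇑(Pi.basisFun ℝ (Fin d)))).toAddSubgroup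

variable {d : ℕ}

lemma measurableSet_cube (d : ℕ) : MeasurableSet (cube d) :=
  MeasurableSet.univ_pi fun _ => measurableSet_Ico

instance (d : ℕ) : Countable (Lat d) := by
  have e : ↥(Submodule.span ℤ (Set.range ⇑(Pi.basisFun ℝ (Fin d)))) ≃ ↥(Lat d) :=
    Equiv.subtypeEquivRight fun x => (Submodule.mem_toAddSubgroup _).symm
  exact Countable.of_equiv _ e

instance (d : ℕ) : VAddCommClass (E d) (Lat d) (E d) :=
  ⟨fun a b c => by
    show a + ((b : E d) + c) = (b : E d) + (a + c)
    exact add_left_comm a b c⟩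

/-- Every element of the lattice is an integer vector. -/
lemma Lat.exists_int (l : Lat d) : ∃ k : Fin d → ℤ, (l : E d) = fun i => (k i : ℝ) := by
  have hl : (l : E d) ∈ Submodule.span ℤ (Set.range ⇑(Pi.basisFun ℝ (Fin d))) :=
    (Submodule.mem_toAddSubgroup _).mp l.2
  have h := (Module.Basis.mem_span_iff_repr_mem ℤ (Pi.basisFun ℝ (Fin d)) _).mp hl
  choose k hk using h
  refine ⟨k, funext fun i => ?_⟩
  have := hk i
  rw [Pi.basisFun_repr] at this
  rw [← this]
  simp

/-- Substitution `x = u + ω` in a set lintegral. -/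
lemma setLIntegral_vadd (g : E d → ℝ≥0∞) {s : Set (E d)} (hs : MeasurableSet s) (u : E d) :
    ∫⁻ x in u +ᵥ s, g x = ∫⁻ ω in s, g (u + ω) := by
  have hmem : ∀ ω : E d, u + ω ∈ u +ᵥ s ↔ ω ∈ s := by
    intro ω
    rw [Set.mem_vadd_set_iff_neg_vadd_mem]
    simp [vadd_eq_add]
  calc ∫⁻ x in u +ᵥ s, g x = ∫⁻ x, (u +ᵥ s).indicator g x := by
        rw [lintegral_indicator (hs.const_vadd u)]
    _ = ∫⁻ ω, (u +ᵥ s).indicator g (u + ω) :=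
        (lintegral_add_left_eq_self ((u +ᵥ s).indicator g) u).symm
    _ = ∫⁻ ω, s.indicator (fun ω => g (u + ω)) ω := by
        refine lintegral_congr fun ω => ?_
        by_cases h : ω ∈ s
        · rw [Set.indicator_of_mem h, Set.indicator_of_mem ((hmem ω).mpr h)]
        · rw [Set.indicator_of_notMem h, Set.indicator_of_notMem (fun hh => h ((hmem ω).mp hh))]
    _ = ∫⁻ ω in s, g (u + ω) := lintegral_indicator hs _

/-- The density measure of a periodic function is invariant under the lattice. -/
lemma vaddInvariant_withDensity (g : E d → ℝ≥0∞)
    (hper : ∀ k : Fin d → ℤ, ∀ x, g ((fun i => (k i : ℝ)) + x) = g x) :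
    VAddInvariantMeasure (Lat d) (E d) (volume.withDensity g) := by
  constructor
  intro l s hs
  obtain ⟨k, hk⟩ := Lat.exists_int l
  have hpre : (fun x => l +ᵥ x) ⁻¹' s = (fun x => (l : E d) + x) ⁻¹' s := rfl
  rw [hpre, withDensity_apply _ (hs.preimage (measurable_const_add _)), withDensity_apply _ hs]
  have h1 : ∫⁻ x in (fun x => (l : E d) + x) ⁻¹' s, g x
      = ∫⁻ x, ((fun x => (l : E d) + x) ⁻¹' s).indicator g x := by
    rw [lintegral_indicator (hs.preimage (measurable_const_add _))]
  have h2 : ∫⁻ x in s, g x = ∫⁻ x, s.indicator g x := by rw [lintegral_indicator hs]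
  rw [h1, h2, ← lintegral_add_left_eq_self (s.indicator g) (l : E d)]
  refine lintegral_congr fun x => ?_
  by_cases h : (l : E d) + x ∈ s
  · rw [Set.indicator_of_mem h, Set.indicator_of_mem (by exact h : x ∈ _)]
    rw [hk] at h ⊢
    exact (hper k x).symm
  · rw [Set.indicator_of_notMem h, Set.indicator_of_notMem (by exact h : x ∉ _)]

/-- The integral of a periodic function over any translate of the cube equals its
integral over the cube. -/
lemma setLIntegral_vadd_cube (g : E d → ℝ≥0∞) (hg : Measurable g)
    (hper : ∀ k : Fin d → ℤ, ∀ x, g ((fun i => (k i : ℝ)) + x) = g x) (v : E d) :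
    ∫⁻ x in v +ᵥ cube d, g x = ∫⁻ x in cube d, g x := by
  classical
  set D := ZSpan.fundamentalDomain (Pi.basisFun ℝ (Fin d)) with hD
  have hcube : cube d = (fun _ => -(1:ℝ)/2 : E d) +ᵥ D := by
    rw [hD, ZSpan.fundamentalDomain_pi_basisFun]
    ext x
    rw [Set.mem_vadd_set_iff_neg_vadd_mem]
    simp only [cube, Set.mem_pi, Set.mem_univ, forall_true_left, Set.mem_Ico, vadd_eq_add,
      Pi.add_apply, Pi.neg_apply, true_implies]
    constructor
    · intro h i
      have := h i
      constructor <;> [linarith [(this).1]; linarith [(this).2]]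
    · intro h i
      have := h i
      constructor <;> [linarith [(this).1]; linarith [(this).2]]
  set ν := volume.withDensity g with hν
  haveI := vaddInvariant_withDensity g hper
  have hfd : ∀ w : E d, IsAddFundamentalDomain (Lat d) (w +ᵥ D) ν := fun w =>
    ((ZSpan.isAddFundamentalDomain' (Pi.basisFun ℝ (Fin d)) volume).vadd_of_comm w).mono
      (withDensity_absolutelyContinuous _ _)
  have h1 : v +ᵥ cube d = (v + fun _ => -(1:ℝ)/2) +ᵥ D := by rw [hcube, vadd_vadd]
  have h2 : ν (v +ᵥ cube d) = ν (cube d) := by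
    rw [h1, hcube]
    exact (hfd _).measure_eq (hfd _)
  rwa [hν, withDensity_apply _ ((measurableSet_cube d).const_vadd v),
    withDensity_apply _ (measurableSet_cube d)] at h2


/-- The big cube `[-m, m]^d` is covered by `(2m+1)^d` integer translates of the unit cube. -/
lemma cover_subset (d m : ℕ) :
    (Set.univ.pi fun _ : Fin d => Set.Icc (-(m:ℝ)) m) ⊆
      ⋃ k ∈ Fintype.piFinset (fun _ : Fin d => Finset.Icc (-(m:ℤ)) m),
        ((fun i => ((k i : ℤ) : ℝ)) +ᵥ cube d) := by
  classical
  intro ω hω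
  simp only [Set.mem_pi, Set.mem_univ, forall_true_left, Set.mem_Icc, true_implies] at hω
  have hmemT : (fun i => round (ω i)) ∈ Fintype.piFinset (fun _ : Fin d => Finset.Icc (-(m:ℤ)) m) := by
    rw [Fintype.mem_piFinset]
    intro i
    rw [Finset.mem_Icc, round_eq]
    constructor
    · rw [Int.le_floor]; push_cast; linarith [(hω i).1]
    · have h3 : (⌊ω i + 1/2⌋ : ℝ) ≤ ω i + 1/2 := Int.floor_le _
      have h4 : (⌊ω i + 1/2⌋ : ℝ) < (m:ℝ) + 1 := by linarith [(hω i).2]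
      exact_mod_cast Int.lt_add_one_iff.mp (by exact_mod_cast h4)
  refine Set.mem_biUnion hmemT ?_
  · rw [Set.mem_vadd_set_iff_neg_vadd_mem]
    simp only [cube, vadd_eq_add, Set.mem_pi, Set.mem_univ, forall_true_left, Pi.add_apply,
      Pi.neg_apply, Set.mem_Ico, true_implies]
    intro i
    rw [round_eq]
    have h1 : (0:ℝ) ≤ Int.fract (ω i + 1/2) := Int.fract_nonneg _
    have h2 : Int.fract (ω i + 1/2) < 1 := Int.fract_lt_one _
    have h3 : ω i + 1/2 - ⌊ω i + 1/2⌋ = Int.fract (ω i + 1/2) := Int.self_sub_floor _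
    constructor <;> [linarith; linarith]

/-- Key pointwise bound: the `θ`-average of a translated periodic function is controlled by
its mean over the unit cube. -/
lemma key_pointwise (d m : ℕ) (θ : E d → ℝ) (M : ℝ)
    (hθle : ∀ ω, ENNReal.ofReal (θ ω) ≤ ENNReal.ofReal M *
      (Set.univ.pi fun _ : Fin d => Set.Icc (-(m:ℝ)) m).indicator 1 ω)
    (g : E d → ℝ≥0∞) (hg : Measurable g)
    (hper : ∀ k : Fin d → ℤ, ∀ x, g ((fun i => (k i : ℝ)) + x) = g x) (u : E d) :
    ∫⁻ ω, g (u + ω) * ENNReal.ofReal (θ ω) ≤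
      ENNReal.ofReal M * (((2*m+1)^d : ℕ) * ∫⁻ x in cube d, g x) := by
  classical
  set Q : Set (E d) := Set.univ.pi fun _ : Fin d => Set.Icc (-(m:ℝ)) m with hQdef
  have hQ : MeasurableSet Q := MeasurableSet.univ_pi fun _ => measurableSet_Icc
  set T := Fintype.piFinset (fun _ : Fin d => Finset.Icc (-(m:ℤ)) m) with hT
  have step1 : ∫⁻ ω, g (u + ω) * ENNReal.ofReal (θ ω) ≤
      ENNReal.ofReal M * ∫⁻ ω in Q, g (u + ω) := by
    have hpt : ∀ ω, g (u + ω) * ENNReal.ofReal (θ ω) ≤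
        ENNReal.ofReal M * Q.indicator (fun ω => g (u + ω)) ω := by
      intro ω
      by_cases h : ω ∈ Q
      · rw [Set.indicator_of_mem h]
        calc g (u + ω) * ENNReal.ofReal (θ ω)
            ≤ g (u + ω) * (ENNReal.ofReal M * Q.indicator 1 ω) :=
              mul_le_mul_right (hθle ω) _
          _ = ENNReal.ofReal M * g (u + ω) := by
              rw [Set.indicator_of_mem h]; simp [mul_comm]
      · rw [Set.indicator_of_notMem h]
        have := hθle ω
        rw [Set.indicator_of_notMem h] at this
        simp only [mul_zero] at this
        simp [le_zero_iff.mp this]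
    calc ∫⁻ ω, g (u + ω) * ENNReal.ofReal (θ ω)
        ≤ ∫⁻ ω, ENNReal.ofReal M * Q.indicator (fun ω => g (u + ω)) ω := lintegral_mono hpt
      _ = ENNReal.ofReal M * ∫⁻ ω in Q, g (u + ω) := by
          rw [lintegral_const_mul' _ _ ENNReal.ofReal_ne_top, lintegral_indicator hQ]
  have hgu : Measurable fun ω => g (u + ω) := hg.comp (measurable_const_add u)
  set ν : Measure (E d) := volume.withDensity (fun ω => g (u + ω)) with hν
  have hνap : ∀ s : Set (E d), MeasurableSet s → ν s = ∫⁻ ω in s, g (u + ω) := fun s hs =>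
    withDensity_apply _ hs
  have step2 : ∫⁻ ω in Q, g (u + ω) ≤ ((2*m+1)^d : ℕ) * ∫⁻ x in cube d, g x := by
    have hsub := cover_subset d m
    have hle : ν Q ≤ ∑ k ∈ T, ν ((fun i => ((k i : ℤ) : ℝ)) +ᵥ cube d) :=
      le_trans (measure_mono hsub) (measure_biUnion_finset_le T _)
    have heach : ∀ k : Fin d → ℤ,
        ν ((fun i => ((k i : ℤ) : ℝ)) +ᵥ cube d) = ∫⁻ x in cube d, g x := by
      intro k
      rw [hνap _ ((measurableSet_cube d).const_vadd _),
        setLIntegral_vadd (fun ω => g (u + ω)) (measurableSet_cube d)]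
      have : ∀ ω, g (u + ((fun i => ((k i : ℤ) : ℝ)) + ω)) = g (u + ω) := by
        intro ω
        rw [show u + ((fun i => ((k i : ℤ) : ℝ)) + ω) = (fun i => ((k i : ℤ) : ℝ)) + (u + ω) by
          funext i; simp [Pi.add_apply]; ring]
        exact hper k (u + ω)
      rw [lintegral_congr fun ω => this ω]
      rw [← setLIntegral_vadd g (measurableSet_cube d) u]
      exact setLIntegral_vadd_cube g hg hper u
    have hcard : T.card = (2*m+1)^d := by
      rw [hT, Fintype.card_piFinset]
      simp only [Int.card_Icc]
      rw [Finset.prod_const, Finset.card_univ, Fintype.card_fin]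
      congr 1
      omega
    calc ∫⁻ ω in Q, g (u + ω) = ν Q := (hνap Q hQ).symm
      _ ≤ ∑ k ∈ T, ν ((fun i => ((k i : ℤ) : ℝ)) +ᵥ cube d) := hle
      _ = ∑ _k ∈ T, ∫⁻ x in cube d, g x := Finset.sum_congr rfl fun k _ => heach k
      _ = ((2*m+1)^d : ℕ) * ∫⁻ x in cube d, g x := by
          rw [Finset.sum_const, hcard, nsmul_eq_mul]
  exact le_trans step1 (mul_le_mul_right step2 _)

end St13

lemma hhalf (t : ℝ≥0∞) : t ^ ((1:ℝ)/2) * t ^ ((1:ℝ)/2) = t := by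
  rw [← sq, ← ENNReal.rpow_natCast (t ^ ((1:ℝ)/2)) 2, ← ENNReal.rpow_mul]
  norm_num

lemma cs_bound {d : ℕ} (θ : (Fin d → ℝ) → ℝ) (hθ_meas : Measurable θ)
    (hθ_nonneg : ∀ x, 0 ≤ θ x)
    (hθ1 : ∫⁻ ω, ENNReal.ofReal (θ ω) = 1) (φ : (Fin d → ℝ) → ℝ) (hφ : Measurable φ)
    (ε : ℝ) (x : Fin d → ℝ) :
    (‖∫ ω, φ (x - ε • ω) * θ ω‖₊ : ℝ≥0∞) ^ 2 ≤
      ∫⁻ ω, (‖φ (x - ε • ω)‖₊ : ℝ≥0∞) ^ 2 * ENNReal.ofReal (θ ω) := by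
  set F : (Fin d → ℝ) → ℝ≥0∞ := fun ω => (‖φ (x - ε • ω)‖₊ : ℝ≥0∞) with hF
  have hFmeas : Measurable F :=
    (hφ.comp (measurable_const.sub (measurable_id.const_smul ε))).enorm
  have hthm : Measurable fun ω => ENNReal.ofReal (θ ω) :=
    ENNReal.measurable_ofReal.comp hθ_meas
  set B : ℝ≥0∞ := ∫⁻ ω, F ω ^ 2 * ENNReal.ofReal (θ ω) with hB
  have h1 : (‖∫ ω, φ (x - ε • ω) * θ ω‖₊ : ℝ≥0∞) ≤ ∫⁻ ω, F ω * ENNReal.ofReal (θ ω) := by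
    refine le_trans (enorm_integral_le_lintegral_enorm _)
      (le_of_eq (lintegral_congr fun ω => ?_))
    rw [enorm_mul, Real.enorm_eq_ofReal (hθ_nonneg ω)]
    rfl
  have h2 : ∫⁻ ω, F ω * ENNReal.ofReal (θ ω) ≤ B ^ ((1:ℝ)/2) := by
    have hconj : Real.HolderConjugate 2 2 := Real.HolderConjugate.two_two
    have hCS := ENNReal.lintegral_mul_le_Lp_mul_Lq volume hconj
      (f := fun ω => F ω * (ENNReal.ofReal (θ ω)) ^ ((1:ℝ)/2))
      (g := fun ω => (ENNReal.ofReal (θ ω)) ^ ((1:ℝ)/2))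
      ((hFmeas.mul (hthm.pow_const _)).aemeasurable)
      ((hthm.pow_const _).aemeasurable)
    have e1 : ∀ ω, F ω * ENNReal.ofReal (θ ω) =
        ((fun ω => F ω * (ENNReal.ofReal (θ ω)) ^ ((1:ℝ)/2)) *
          (fun ω => (ENNReal.ofReal (θ ω)) ^ ((1:ℝ)/2))) ω := by
      intro ω
      simp only [Pi.mul_apply]
      rw [mul_assoc, hhalf]
    have e2 : ∫⁻ ω, (F ω * (ENNReal.ofReal (θ ω)) ^ ((1:ℝ)/2)) ^ (2:ℝ) = B := by
      refine lintegral_congr fun ω => ?_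
      rw [ENNReal.mul_rpow_of_nonneg _ _ (by norm_num : (0:ℝ) ≤ 2), ← ENNReal.rpow_mul,
        ENNReal.rpow_two]
      norm_num
    have e3 : ∫⁻ ω, ((ENNReal.ofReal (θ ω)) ^ ((1:ℝ)/2)) ^ (2:ℝ) = 1 := by
      rw [← hθ1]
      refine lintegral_congr fun ω => ?_
      rw [← ENNReal.rpow_mul]
      norm_num
    calc ∫⁻ ω, F ω * ENNReal.ofReal (θ ω)
        = ∫⁻ ω, ((fun ω => F ω * (ENNReal.ofReal (θ ω)) ^ ((1:ℝ)/2)) *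
            (fun ω => (ENNReal.ofReal (θ ω)) ^ ((1:ℝ)/2))) ω := lintegral_congr e1
      _ ≤ (∫⁻ ω, (F ω * (ENNReal.ofReal (θ ω)) ^ ((1:ℝ)/2)) ^ (2:ℝ)) ^ ((1:ℝ)/2) *
            (∫⁻ ω, ((ENNReal.ofReal (θ ω)) ^ ((1:ℝ)/2)) ^ (2:ℝ)) ^ ((1:ℝ)/2) := hCS
      _ = B ^ ((1:ℝ)/2) := by rw [e2, e3]; simp
  calc (‖∫ ω, φ (x - ε • ω) * θ ω‖₊ : ℝ≥0∞) ^ 2 ≤ (B ^ ((1:ℝ)/2)) ^ 2 :=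
        pow_le_pow_left' (le_trans h1 h2) 2
    _ = B := by
        rw [← ENNReal.rpow_natCast (B ^ ((1:ℝ)/2)) 2, ← ENNReal.rpow_mul]
        norm_num


/-- Let `θ` be a bounded measurable compactly supported kernel with
`θ ≥ 0` and `∫ θ = 1`. Then there is a constant `C = C(θ, d)` such that for every `ε > 0`,
every `φ ∈ L²(ℝ^d)` and every measurable `1`-periodic `b` with `b|_Y ∈ L²(Y)`, the function
`x ↦ b(x/ε)(Θ^ε φ)(x)` is in `L²(ℝ^d)` and `‖b^ε Θ^ε φ‖_{L²} ≤ C ⟨b²⟩^{1/2} ‖φ‖_{L²}`. -/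
theorem statement13 (d : ℕ) (θ : (Fin d → ℝ) → ℝ)
    (hθ_meas : Measurable θ) (hθ_bdd : ∃ Mθ : ℝ, ∀ x, θ x ≤ Mθ)
    (hθ_supp : HasCompactSupport θ) (hθ_nonneg : ∀ x, 0 ≤ θ x)
    (hθ_int : ∫ x, θ x = 1) :
    ∃ C : ℝ, 0 < C ∧ ∀ ε : ℝ, 0 < ε →
      ∀ φ : (Fin d → ℝ) → ℝ, MemLp φ 2 volume →
      ∀ b : (Fin d → ℝ) → ℝ, Measurable b →
        (∀ k : Fin d → ℤ, ∀ᵐ x : Fin d → ℝ, b (x + fun i => (k i : ℝ)) = b x) →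
        MemLp b 2 (volume.restrict (cube d)) →
      MemLp (fun x => b (ε⁻¹ • x) * smoothΘ d θ ε φ x) 2 volume ∧
        eLpNorm (fun x => b (ε⁻¹ • x) * smoothΘ d θ ε φ x) 2 volume ≤
          ENNReal.ofReal (C * (∫ y in cube d, (b y) ^ 2) ^ ((1:ℝ)/2)) *
            eLpNorm φ 2 volume := by

  classical
  obtain ⟨Mθ, hMθ⟩ := hθ_bdd
  obtain ⟨r, hr⟩ := hθ_supp.isBounded.subset_closedBall 0
  set m : ℕ := ⌈r⌉₊ with hm
  set M : ℝ := max Mθ 0 with hMdef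
  have hM0 : 0 ≤ M := le_max_right _ _
  have hMN0 : 0 ≤ M * (((2*m+1)^d : ℕ) : ℝ) := mul_nonneg hM0 (Nat.cast_nonneg _)
  set C : ℝ := Real.sqrt (M * (((2*m+1)^d : ℕ) : ℝ)) + 1 with hC
  have hC0 : 0 < C := add_pos_of_nonneg_of_pos (Real.sqrt_nonneg _) one_pos
  set Q : Set (Fin d → ℝ) := Set.univ.pi fun _ : Fin d => Set.Icc (-(m:ℝ)) m with hQ
  have hQmeas : MeasurableSet Q := MeasurableSet.univ_pi fun _ => measurableSet_Icc
  have hQsupp : ∀ ω, ω ∉ Q → θ ω = 0 := by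
    intro ω hω
    by_contra hne
    apply hω
    have hmem : ω ∈ tsupport θ := subset_tsupport θ hne
    have hball := hr hmem
    rw [Metric.mem_closedBall, dist_zero_right] at hball
    simp only [hQ, Set.mem_pi, Set.mem_univ, forall_true_left, Set.mem_Icc, true_implies]
    intro i
    have h1 : |ω i| ≤ ‖ω‖ := by
      have := norm_le_pi_norm ω i; rwa [Real.norm_eq_abs] at this
    have h2 : ‖ω‖ ≤ (m:ℝ) := le_trans hball (Nat.le_ceil r)
    have h3 : |ω i| ≤ (m:ℝ) := le_trans h1 h2
    exact abs_le.mp h3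
  have hθle : ∀ ω, ENNReal.ofReal (θ ω) ≤ ENNReal.ofReal M * Q.indicator 1 ω := by
    intro ω
    by_cases h : ω ∈ Q
    · rw [Set.indicator_of_mem h]
      simp only [Pi.one_apply, mul_one]
      exact ENNReal.ofReal_le_ofReal (le_trans (hMθ ω) (le_max_left _ _))
    · rw [Set.indicator_of_notMem h, mul_zero, hQsupp ω h]
      simp
  have hθint : Integrable θ volume := by
    refine ⟨hθ_meas.aestronglyMeasurable, ?_⟩
    show ∫⁻ ω, (‖θ ω‖₊ : ℝ≥0∞) < ⊤
    calc ∫⁻ ω, (‖θ ω‖₊ : ℝ≥0∞)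
        = ∫⁻ ω, ENNReal.ofReal (θ ω) :=
          lintegral_congr fun ω => Real.enorm_eq_ofReal (hθ_nonneg ω)
      _ ≤ ∫⁻ ω, ENNReal.ofReal M * Q.indicator 1 ω := lintegral_mono hθle
      _ = ENNReal.ofReal M * volume Q := by
          rw [lintegral_const_mul' _ _ ENNReal.ofReal_ne_top, lintegral_indicator_one hQmeas]
      _ < ⊤ := ENNReal.mul_lt_top ENNReal.ofReal_lt_top
          ((isCompact_univ_pi fun _ => isCompact_Icc).measure_lt_top)
  have hθ1 : ∫⁻ ω, ENNReal.ofReal (θ ω) = 1 := by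
    rw [← ofReal_integral_eq_lintegral_ofReal hθint (Filter.Eventually.of_forall hθ_nonneg),
      hθ_int, ENNReal.ofReal_one]
  refine ⟨C, hC0, ?_⟩
  intro ε hε φ hφ b hb_meas hb_per hbL2
  have hεne : ε ≠ 0 := ne_of_gt hε
  -- measurable representative of φ
  set φ' : (Fin d → ℝ) → ℝ := hφ.1.mk φ with hφ'def
  have hφ'meas : Measurable φ' := hφ.1.stronglyMeasurable_mk.measurable
  have hφφ' : φ =ᵐ[volume] φ' := hφ.1.ae_eq_mk
  have hsmooth_eq : ∀ x, smoothΘ d θ ε φ x = smoothΘ d θ ε φ' x := by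
    intro x
    refine integral_congr_ae ?_
    have hqmp : Measure.QuasiMeasurePreserving (fun ω : Fin d → ℝ => x - ε • ω)
        volume volume := by
      have h1 : MeasurePreserving (fun t : Fin d → ℝ => x - t) volume volume := by
        have := (measurePreserving_add_left (volume : Measure (Fin d → ℝ)) x).comp
          (Measure.measurePreserving_neg volume)
        simpa [Function.comp_def, sub_eq_add_neg] using this
      exact h1.quasiMeasurePreserving.comp (Measure.quasiMeasurePreserving_smul volume hεne)
    filter_upwards [hqmp.ae_eq_comp hφφ'] with ω hω
    simp only [Function.comp] at hω
    rw [hω]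
  -- periodic representative of b
  set b' : (Fin d → ℝ) → ℝ := fun x => b (fun i => Int.fract (x i)) with hb'def
  have hb'meas : Measurable b' :=
    hb_meas.comp (measurable_pi_lambda _ fun i => measurable_fract.comp (measurable_pi_apply i))
  have hb'per : ∀ (k : Fin d → ℤ) (x : Fin d → ℝ), b' ((fun i => ((k i : ℤ) : ℝ)) + x) = b' x := by
    intro k x
    simp only [hb'def, Pi.add_apply]
    congr 1
    funext i
    exact Int.fract_intCast_add _ _
  have hbb' : b' =ᵐ[volume] b := by
    have h1 : ∀ k : Fin d → ℤ, ∀ᵐ x : Fin d → ℝ, b (x - fun i => ((k i : ℤ) : ℝ)) = b x := by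
      intro k
      have h2 : (fun x : Fin d → ℝ => b (x + fun i => ((k i : ℤ) : ℝ))) =ᵐ[volume] b := hb_per k
      have hmp : MeasurePreserving (fun x : Fin d → ℝ => x - fun i => ((k i : ℤ) : ℝ))
          volume volume := by
        have := measurePreserving_add_right (volume : Measure (Fin d → ℝ))
          (-(fun i => ((k i : ℤ) : ℝ)))
        simpa [sub_eq_add_neg] using this
      filter_upwards [hmp.quasiMeasurePreserving.ae_eq_comp h2] with x hx
      simp only [Function.comp, sub_add_cancel] at hx
      exact hx.symm
    have hall : ∀ᵐ x : Fin d → ℝ, ∀ k : Fin d → ℤ,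
        b (x - fun i => ((k i : ℤ) : ℝ)) = b x := ae_all_iff.mpr h1
    filter_upwards [hall] with x hx
    have hfr : (fun i => Int.fract (x i)) = x - fun i => ((⌊x i⌋ : ℤ) : ℝ) := by
      funext i
      simp only [Pi.sub_apply]
      rw [Int.self_sub_floor]
    show b (fun i => Int.fract (x i)) = b x
    rw [hfr]
    exact hx _
  -- squared periodic density
  set g : (Fin d → ℝ) → ℝ≥0∞ := fun u => (‖b' u‖₊ : ℝ≥0∞) ^ 2 with hgdef
  have hgmeas : Measurable g := hb'meas.enorm.pow_const 2
  have hgper : ∀ (k : Fin d → ℤ) (x : Fin d → ℝ),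
      g ((fun i => ((k i : ℤ) : ℝ)) + x) = g x := by
    intro k x
    simp only [hgdef]
    rw [hb'per k x]
  have hgfin : ∀ u, g u ≠ ⊤ := fun u => ENNReal.pow_ne_top ENNReal.coe_ne_top
  set I : ℝ := ∫ y in cube d, (b y) ^ 2 with hI
  have hI0 : 0 ≤ I := integral_nonneg fun y => sq_nonneg _
  have hJ : ∫⁻ x in cube d, g x = ENNReal.ofReal I := by
    have hb'b : b' =ᵐ[volume.restrict (cube d)] b :=
      hbb'.filter_mono (ae_mono Measure.restrict_le_self)
    have h1 : ∫⁻ x in cube d, g x = ∫⁻ x in cube d, ENNReal.ofReal ((b x) ^ 2) := by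
      refine lintegral_congr_ae ?_
      filter_upwards [hb'b] with u hu
      simp only [hgdef]
      rw [hu, ← enorm_eq_nnnorm, Real.enorm_eq_ofReal_abs, ← ENNReal.ofReal_pow (abs_nonneg _), sq_abs]
    rw [h1, ← ofReal_integral_eq_lintegral_ofReal hbL2.integrable_sq
      (Filter.Eventually.of_forall fun y => sq_nonneg _)]
  set K : ℝ≥0∞ := ENNReal.ofReal M * ((((2*m+1)^d : ℕ) : ℝ≥0∞) * ENNReal.ofReal I) with hK
  have hKne : K ≠ ⊤ := by
    rw [hK]
    exact ENNReal.mul_ne_top ENNReal.ofReal_ne_top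
      (ENNReal.mul_ne_top (ENNReal.natCast_ne_top _) ENNReal.ofReal_ne_top)
  have key : ∀ u, ∫⁻ ω, g (u + ω) * ENNReal.ofReal (θ ω) ≤ K := by
    intro u
    have h := St13.key_pointwise d m θ M hθle g hgmeas hgper u
    rwa [hJ] at h
  -- measurability
  have hsmoothmeas : Measurable (smoothΘ d θ ε φ') := by
    have hsm : StronglyMeasurable (fun p : (Fin d → ℝ) × (Fin d → ℝ) =>
        φ' (p.1 - ε • p.2) * θ p.2) :=
      ((hφ'meas.comp (measurable_fst.sub (measurable_snd.const_smul ε))).mul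
        (hθ_meas.comp measurable_snd)).stronglyMeasurable
    exact (StronglyMeasurable.integral_prod_right' hsm).measurable
  have hfeq : (fun x => b (ε⁻¹ • x) * smoothΘ d θ ε φ x)
      = fun x => b (ε⁻¹ • x) * smoothΘ d θ ε φ' x := funext fun x => by rw [hsmooth_eq]
  have hfmeas : AEStronglyMeasurable (fun x => b (ε⁻¹ • x) * smoothΘ d θ ε φ x) volume := by
    rw [hfeq]
    exact ((hb_meas.comp (measurable_id.const_smul ε⁻¹)).mul hsmoothmeas).aestronglyMeasurable
  -- squared norm rewrite
  have haeb : (fun x : Fin d → ℝ => b' (ε⁻¹ • x)) =ᵐ[volume] (fun x => b (ε⁻¹ • x)) := by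
    have hqmp2 : Measure.QuasiMeasurePreserving (fun x : Fin d → ℝ => ε⁻¹ • x) volume volume :=
      Measure.quasiMeasurePreserving_smul volume (inv_ne_zero hεne)
    exact hqmp2.ae_eq_comp hbb'
  have hA1 : ∫⁻ x, (‖b (ε⁻¹ • x) * smoothΘ d θ ε φ x‖₊ : ℝ≥0∞) ^ 2
      = ∫⁻ x, g (ε⁻¹ • x) * (‖smoothΘ d θ ε φ' x‖₊ : ℝ≥0∞) ^ 2 := by
    refine lintegral_congr_ae ?_
    filter_upwards [haeb] with x hx
    rw [hsmooth_eq x, nnnorm_mul, ENNReal.coe_mul, mul_pow]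
    simp only [hgdef]
    rw [← hx]
  set ψ : (Fin d → ℝ) → ℝ≥0∞ := fun y => (‖φ' y‖₊ : ℝ≥0∞) ^ 2 with hψdef
  have hψmeas : Measurable ψ := hφ'meas.enorm.pow_const 2
  have hψfin : ∀ y, ψ y ≠ ⊤ := fun y => ENNReal.pow_ne_top ENNReal.coe_ne_top
  have hCS : ∀ x, (‖smoothΘ d θ ε φ' x‖₊ : ℝ≥0∞) ^ 2 ≤
      ∫⁻ ω, ψ (x - ε • ω) * ENNReal.ofReal (θ ω) :=
    fun x => cs_bound θ hθ_meas hθ_nonneg hθ1 φ' hφ'meas ε x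
  have step : ∫⁻ x, g (ε⁻¹ • x) * (‖smoothΘ d θ ε φ' x‖₊ : ℝ≥0∞) ^ 2 ≤ K * ∫⁻ y, ψ y := by
    calc ∫⁻ x, g (ε⁻¹ • x) * (‖smoothΘ d θ ε φ' x‖₊ : ℝ≥0∞) ^ 2
        ≤ ∫⁻ x, g (ε⁻¹ • x) * ∫⁻ ω, ψ (x - ε • ω) * ENNReal.ofReal (θ ω) :=
          lintegral_mono fun x => mul_le_mul_right (hCS x) _
      _ = ∫⁻ x, ∫⁻ ω, g (ε⁻¹ • x) * (ψ (x - ε • ω) * ENNReal.ofReal (θ ω)) := by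
          refine lintegral_congr fun x => ?_
          rw [lintegral_const_mul' _ _ (hgfin _)]
      _ = ∫⁻ ω, ∫⁻ x, g (ε⁻¹ • x) * (ψ (x - ε • ω) * ENNReal.ofReal (θ ω)) := by
          refine lintegral_lintegral_swap (Measurable.aemeasurable ?_)
          exact (hgmeas.comp (measurable_fst.const_smul ε⁻¹)).mul
            ((hψmeas.comp (measurable_fst.sub (measurable_snd.const_smul ε))).mul
              (ENNReal.measurable_ofReal.comp (hθ_meas.comp measurable_snd)))
      _ = ∫⁻ ω, ∫⁻ x, (g (ε⁻¹ • x + ω) * ψ x) * ENNReal.ofReal (θ ω) := by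
          refine lintegral_congr fun ω => ?_
          have e : ∫⁻ x, g (ε⁻¹ • x) * (ψ (x - ε • ω) * ENNReal.ofReal (θ ω))
              = ∫⁻ x, (g (ε⁻¹ • x) * ψ (x - ε • ω)) * ENNReal.ofReal (θ ω) :=
            lintegral_congr fun x => by ring
          rw [e, lintegral_mul_const' _ _ ENNReal.ofReal_ne_top,
            lintegral_mul_const' _ _ ENNReal.ofReal_ne_top]
          congr 1
          have hshift := lintegral_add_right_eq_self
            (f := fun x => g (ε⁻¹ • x) * ψ (x - ε • ω)) (ε • ω) (μ := volume)
          rw [← hshift]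
          refine lintegral_congr fun x => ?_
          have e1 : ε⁻¹ • (x + ε • ω) = ε⁻¹ • x + ω := by
            rw [smul_add, smul_smul, inv_mul_cancel₀ hεne, one_smul]
          rw [e1, add_sub_cancel_right]
      _ = ∫⁻ x, ∫⁻ ω, (g (ε⁻¹ • x + ω) * ψ x) * ENNReal.ofReal (θ ω) := by
          refine lintegral_lintegral_swap (Measurable.aemeasurable ?_)
          exact (((hgmeas.comp ((measurable_snd.const_smul ε⁻¹).add measurable_fst)).mul
            (hψmeas.comp measurable_snd)).mul
              (ENNReal.measurable_ofReal.comp (hθ_meas.comp measurable_fst)))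
      _ = ∫⁻ x, ψ x * ∫⁻ ω, g (ε⁻¹ • x + ω) * ENNReal.ofReal (θ ω) := by
          refine lintegral_congr fun x => ?_
          rw [← lintegral_const_mul' _ _ (hψfin x)]
          refine lintegral_congr fun ω => ?_
          ring
      _ ≤ ∫⁻ x, ψ x * K := lintegral_mono fun x => mul_le_mul_right (key _) _
      _ = K * ∫⁻ y, ψ y := by
          rw [lintegral_mul_const' _ _ hKne, mul_comm]
  -- eLpNorm computations
  have hsn : ∀ h : (Fin d → ℝ) → ℝ,
      eLpNorm h 2 volume = (∫⁻ x, (‖h x‖₊ : ℝ≥0∞) ^ 2) ^ ((1:ℝ)/2) := by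
    intro h
    rw [eLpNorm_eq_lintegral_rpow_enorm_toReal (by norm_num) (by norm_num)]
    simp only [ENNReal.toReal_ofNat, ENNReal.rpow_two, enorm_eq_nnnorm]
  have hφnorm : eLpNorm φ 2 volume = (∫⁻ y, ψ y) ^ ((1:ℝ)/2) := by
    rw [eLpNorm_congr_ae hφφ', hsn φ']
  have hfinal_le : eLpNorm (fun x => b (ε⁻¹ • x) * smoothΘ d θ ε φ x) 2 volume ≤
      K ^ ((1:ℝ)/2) * eLpNorm φ 2 volume := by
    rw [hsn _, hφnorm]
    calc (∫⁻ x, (‖b (ε⁻¹ • x) * smoothΘ d θ ε φ x‖₊ : ℝ≥0∞) ^ 2) ^ ((1:ℝ)/2)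
        ≤ (K * ∫⁻ y, ψ y) ^ ((1:ℝ)/2) := by
          refine ENNReal.rpow_le_rpow ?_ (by norm_num)
          rw [hA1]
          exact step
      _ = K ^ ((1:ℝ)/2) * (∫⁻ y, ψ y) ^ ((1:ℝ)/2) :=
          ENNReal.mul_rpow_of_nonneg _ _ (by norm_num)
  have hKC : K ^ ((1:ℝ)/2) ≤ ENNReal.ofReal (C * I ^ ((1:ℝ)/2)) := by
    have hKval : K = ENNReal.ofReal (M * (((2*m+1)^d : ℕ) : ℝ) * I) := by
      rw [hK, ← ENNReal.ofReal_natCast ((2*m+1)^d), ← ENNReal.ofReal_mul (Nat.cast_nonneg _),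
        ← ENNReal.ofReal_mul hM0, mul_assoc]
    rw [hKval, ENNReal.ofReal_rpow_of_nonneg (by positivity) (by norm_num)]
    refine ENNReal.ofReal_le_ofReal ?_
    rw [Real.mul_rpow hMN0 hI0]
    refine mul_le_mul_of_nonneg_right ?_ (Real.rpow_nonneg hI0 _)
    rw [← Real.sqrt_eq_rpow]
    simp only [hC]
    linarith [Real.sqrt_nonneg (M * (((2*m+1)^d : ℕ) : ℝ))]
  have hfinal := le_trans hfinal_le (mul_le_mul_left hKC _)
  exact ⟨⟨hfmeas, lt_of_le_of_lt hfinal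
    (ENNReal.mul_lt_top ENNReal.ofReal_lt_top hφ.2)⟩, hfinal⟩
end
end
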